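/- Fix an integer ℓ ≥ 0. Assume the β-strong P-order and the γ_ℓ-ℓ-weak C-order assumptions hold for some β ≥ 0 and γ_ℓ ≥ 0. Then every ℓ-Greedy-Local matching M' satisfies w(M) ≤ max{1+β, β+γ_ℓ}·w(M') for every matching M of the instance; in other words, the ℓ-Greedy-Local algorithm has approximation ratio at most max{1+β, β+γ_ℓ}. -/
import Mathlib


/-- A matching of a bipartite instance with edge set `E ⊆ P × C`. -/
def IsBipMatching {s q : ℕ} (E M : Finset (Fin s × Fin q)) : Prop :=
  M ⊆ E ∧ ∀ e₁ ∈ M, ∀ e₂ ∈ M, e₁ ≠ e₂ → e₁.1 ≠ e₂.1 ∧ e₁.2 ≠ e₂.2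

/-- The β-strong P-order assumption. -/
def StrongPOrder {s q : ℕ} (E : Finset (Fin s × Fin q)) (w : Fin s × Fin q → ℝ)
    (β : ℝ) : Prop :=
  ∀ i j : Fin s, i < j → ∀ c : Fin q, (i, c) ∈ E → (j, c) ∈ E → w (j, c) ≤ β * w (i, c)

/-- The γℓ-ℓ-weak C-order assumption: the bound is only required when at least ℓ other
neighbors of `p` lie strictly between `c_i` and `c_j` in C-order. -/
def WeakCOrder {s q : ℕ} (E : Finset (Fin s × Fin q)) (w : Fin s × Fin q → ℝ)
    (ℓ : ℕ) (γℓ : ℝ) : Prop :=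
  ∀ i j : Fin q, i < j → ∀ p : Fin s, (p, i) ∈ E → (p, j) ∈ E →
    ℓ ≤ (Finset.univ.filter (fun x : Fin q => i < x ∧ x < j ∧ (p, x) ∈ E)).card →
    w (p, j) ≤ γℓ * w (p, i)

/-- `availSet E M' j` = the set `A_j` of C-vertices `c` with `(p_j, c) ∈ E` that are not
blocked by an edge `(p_i, c) ∈ M'` with `i < j`. -/
def availSet {s q : ℕ} (E M' : Finset (Fin s × Fin q)) (j : Fin s) : Finset (Fin q) :=
  Finset.univ.filter (fun c : Fin q => (j, c) ∈ E ∧ ∀ i : Fin s, i < j → (i, c) ∉ M')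

/-- `firstAvail E M' ℓ j` = the set `F_j` of the min(ℓ+1, |A_j|) first elements of `A_j`
in C-order (those with at most ℓ smaller elements of `A_j`). -/
def firstAvail {s q : ℕ} (E M' : Finset (Fin s × Fin q)) (ℓ : ℕ) (j : Fin s) :
    Finset (Fin q) :=
  (availSet E M' j).filter
    (fun c : Fin q => ((availSet E M' j).filter (fun c' : Fin q => c' < c)).card ≤ ℓ)

/-- An ℓ-Greedy-Local matching: a matching `M'` such that whenever `A_j ≠ ∅`, `p_j` is matched
to a maximum-weight edge among `F_j` (the ℓ+1 first still-available C-neighbors), and whenever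
`A_j = ∅`, `p_j` is unmatched. -/
def GreedyLocalL {s q : ℕ} (E : Finset (Fin s × Fin q)) (w : Fin s × Fin q → ℝ) (ℓ : ℕ)
    (M' : Finset (Fin s × Fin q)) : Prop :=
  IsBipMatching E M' ∧ ∀ j : Fin s,
    ((availSet E M' j).Nonempty →
      ∃ c ∈ firstAvail E M' ℓ j, (j, c) ∈ M' ∧
        ∀ c' ∈ firstAvail E M' ℓ j, w (j, c') ≤ w (j, c)) ∧
    (availSet E M' j = ∅ → ∀ c : Fin q, (j, c) ∉ M')

/-- Under the β-strong P-order and γℓ-ℓ-weak C-order assumptions,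
the ℓ-Greedy-Local algorithm is max{1+β, β+γℓ}-approximate. -/
theorem stmt8 {s q : ℕ} (ℓ : ℕ) (E : Finset (Fin s × Fin q)) (w : Fin s × Fin q → ℝ)
    (hw : ∀ e ∈ E, 0 < w e) (β γℓ : ℝ) (hβ : 0 ≤ β) (hγ : 0 ≤ γℓ)
    (hordP : StrongPOrder E w β) (hordC : WeakCOrder E w ℓ γℓ)
    (M' : Finset (Fin s × Fin q)) (hM' : GreedyLocalL E w ℓ M')
    (M : Finset (Fin s × Fin q)) (hM : IsBipMatching E M) :
    ∑ e ∈ M, w e ≤ max (1 + β) (β + γℓ) * ∑ e ∈ M', w e := by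

  classical
  obtain ⟨⟨hM'E, hM'match⟩, hgreedy⟩ := hM'
  obtain ⟨hME, hMmatch⟩ := hM
  have hW' : 0 ≤ ∑ e ∈ M', w e :=
    Finset.sum_nonneg fun e he => (hw e (hM'E he)).le
  set P : Fin s × Fin q → Prop := fun e => ∃ i, i < e.1 ∧ (i, e.2) ∈ M' with hPdef
  -- Part 1: edges of M whose C-endpoint is blocked by an earlier M' edge
  have hC : ∑ e ∈ M.filter (fun e => P e), w e ≤ β * ∑ f ∈ M', w f := by
    set φ : Fin s × Fin q → Fin s × Fin q :=
      fun e => if h : P e then (h.choose, e.2) else e with hφ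
    have hmem : ∀ e ∈ M.filter (fun e => P e),
        φ e ∈ M' ∧ w e ≤ β * w (φ e) ∧ (φ e).2 = e.2 := by
      intro e he
      rw [Finset.mem_filter] at he
      obtain ⟨heM, hex⟩ := he
      simp only [hφ, dif_pos hex]
      obtain ⟨hlt, hmem'⟩ := hex.choose_spec
      refine ⟨hmem', ?_, trivial⟩
      have := hordP hex.choose e.1 hlt e.2 (hM'E hmem') (by simpa using hME heM)
      simpa using this
    calc ∑ e ∈ M.filter (fun e => P e), w e
        ≤ ∑ e ∈ M.filter (fun e => P e), β * w (φ e) :=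
          Finset.sum_le_sum fun e he => (hmem e he).2.1
      _ = β * ∑ e ∈ M.filter (fun e => P e), w (φ e) := by rw [Finset.mul_sum]
      _ = β * ∑ f ∈ (M.filter (fun e => P e)).image φ, w f := by
          rw [Finset.sum_image]
          intro e₁ h₁ e₂ h₂ heq
          by_contra hne
          have h2 : e₁.2 ≠ e₂.2 :=
            (hMmatch e₁ (Finset.mem_filter.mp h₁).1 e₂ (Finset.mem_filter.mp h₂).1 hne).2
          exact h2 (((hmem e₁ h₁).2.2).symm.trans
            ((heq ▸ rfl : (φ e₁).2 = (φ e₂).2).trans (hmem e₂ h₂).2.2))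
      _ ≤ β * ∑ f ∈ M', w f := by
          apply mul_le_mul_of_nonneg_left _ hβ
          apply Finset.sum_le_sum_of_subset_of_nonneg
          · intro f hf
            obtain ⟨e, he, rfl⟩ := Finset.mem_image.mp hf
            exact (hmem e he).1
          · intro f hf _; exact (hw f (hM'E hf)).le
  -- Part 2: edges of M whose C-endpoint is still available at time e.1
  have hPp : ∑ e ∈ M.filter (fun e => ¬ P e), w e ≤ max 1 γℓ * ∑ f ∈ M', w f := by
    have havail : ∀ e ∈ M.filter (fun e => ¬ P e), e.2 ∈ availSet E M' e.1 := by
      intro e he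
      rw [Finset.mem_filter] at he
      obtain ⟨heM, hnP⟩ := he
      simp only [availSet, Finset.mem_filter, Finset.mem_univ, true_and]
      exact ⟨by simpa using hME heM, fun i hi hm => hnP ⟨i, hi, hm⟩⟩
    set φ : Fin s × Fin q → Fin s × Fin q :=
      fun e => if h : (availSet E M' e.1).Nonempty
        then (e.1, ((hgreedy e.1).1 h).choose) else e with hφ
    have hmem : ∀ e ∈ M.filter (fun e => ¬ P e),
        φ e ∈ M' ∧ w e ≤ max 1 γℓ * w (φ e) ∧ (φ e).1 = e.1 := by
      intro e he
      have hav := havail e he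
      have hne : (availSet E M' e.1).Nonempty := ⟨e.2, hav⟩
      simp only [hφ, dif_pos hne]
      obtain ⟨hcF, hcM', hcmax⟩ := ((hgreedy e.1).1 hne).choose_spec
      set cs := ((hgreedy e.1).1 hne).choose with hcs
      have hposcs : 0 < w (e.1, cs) := hw _ (hM'E hcM')
      refine ⟨hcM', ?_, trivial⟩
      by_cases hF : e.2 ∈ firstAvail E M' ℓ e.1
      · calc w e = w (e.1, e.2) := by rw [Prod.mk.eta]
          _ ≤ w (e.1, cs) := hcmax e.2 hF
          _ ≤ max 1 γℓ * w (e.1, cs) :=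
              le_mul_of_one_le_left hposcs.le (le_max_left 1 γℓ)
      · have hcard : ℓ < ((availSet E M' e.1).filter (fun c' => c' < e.2)).card := by
          by_contra hle
          push_neg at hle
          exact hF (Finset.mem_filter.mpr ⟨hav, hle⟩)
        set c₁ := (availSet E M' e.1).min' hne with hc₁def
        have hc₁A : c₁ ∈ availSet E M' e.1 := Finset.min'_mem _ _
        have hc₁F : c₁ ∈ firstAvail E M' ℓ e.1 := by
          refine Finset.mem_filter.mpr ⟨hc₁A, ?_⟩
          have hempty : (availSet E M' e.1).filter (fun c' => c' < c₁) = ∅ := by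
            apply Finset.filter_eq_empty_iff.mpr
            intro c' hc'
            exact not_lt.mpr (Finset.min'_le _ _ hc')
          simp [hempty]
        have hc₁lt : c₁ < e.2 :=
          lt_of_le_of_ne (Finset.min'_le _ _ hav) (fun h => hF (h ▸ hc₁F))
        have hbetween : ℓ ≤ (Finset.univ.filter
            (fun x : Fin q => c₁ < x ∧ x < e.2 ∧ (e.1, x) ∈ E)).card := by
          have hsub : ((availSet E M' e.1).filter (fun c' => c' < e.2)).erase c₁ ⊆
              Finset.univ.filter (fun x : Fin q => c₁ < x ∧ x < e.2 ∧ (e.1, x) ∈ E) := by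
            intro x hx
            rw [Finset.mem_erase, Finset.mem_filter] at hx
            obtain ⟨hne', hxA, hxlt⟩ := hx
            refine Finset.mem_filter.mpr ⟨Finset.mem_univ _,
              lt_of_le_of_ne (Finset.min'_le _ _ hxA) (Ne.symm hne'), hxlt, ?_⟩
            have := Finset.mem_filter.mp hxA
            exact this.2.1
          have hc₁S : c₁ ∈ (availSet E M' e.1).filter (fun c' => c' < e.2) :=
            Finset.mem_filter.mpr ⟨hc₁A, hc₁lt⟩
          calc ℓ ≤ ((availSet E M' e.1).filter (fun c' => c' < e.2)).card - 1 :=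
                Nat.le_sub_one_of_lt hcard
            _ = (((availSet E M' e.1).filter (fun c' => c' < e.2)).erase c₁).card :=
                (Finset.card_erase_of_mem hc₁S).symm
            _ ≤ _ := Finset.card_le_card hsub
        have hE1 : (e.1, c₁) ∈ E := by
          have := Finset.mem_filter.mp hc₁A
          exact this.2.1
        have hE2 : (e.1, e.2) ∈ E := by
          have := Finset.mem_filter.mp hav
          exact this.2.1
        have hwc : w (e.1, e.2) ≤ γℓ * w (e.1, c₁) :=
          hordC c₁ e.2 hc₁lt e.1 hE1 hE2 hbetween
        calc w e = w (e.1, e.2) := by rw [Prod.mk.eta]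
          _ ≤ γℓ * w (e.1, c₁) := hwc
          _ ≤ γℓ * w (e.1, cs) :=
              mul_le_mul_of_nonneg_left (hcmax c₁ hc₁F) hγ
          _ ≤ max 1 γℓ * w (e.1, cs) :=
              mul_le_mul_of_nonneg_right (le_max_right 1 γℓ) hposcs.le
    calc ∑ e ∈ M.filter (fun e => ¬ P e), w e
        ≤ ∑ e ∈ M.filter (fun e => ¬ P e), max 1 γℓ * w (φ e) :=
          Finset.sum_le_sum fun e he => (hmem e he).2.1
      _ = max 1 γℓ * ∑ e ∈ M.filter (fun e => ¬ P e), w (φ e) := by rw [Finset.mul_sum]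
      _ = max 1 γℓ * ∑ f ∈ (M.filter (fun e => ¬ P e)).image φ, w f := by
          rw [Finset.sum_image]
          intro e₁ h₁ e₂ h₂ heq
          by_contra hne
          have h1 : e₁.1 ≠ e₂.1 :=
            (hMmatch e₁ (Finset.mem_filter.mp h₁).1 e₂ (Finset.mem_filter.mp h₂).1 hne).1
          exact h1 (((hmem e₁ h₁).2.2).symm.trans
            ((heq ▸ rfl : (φ e₁).1 = (φ e₂).1).trans (hmem e₂ h₂).2.2))
      _ ≤ max 1 γℓ * ∑ f ∈ M', w f := by
          apply mul_le_mul_of_nonneg_left _ (le_trans zero_le_one (le_max_left 1 γℓ))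
          apply Finset.sum_le_sum_of_subset_of_nonneg
          · intro f hf
            obtain ⟨e, he, rfl⟩ := Finset.mem_image.mp hf
            exact (hmem e he).1
          · intro f hf _; exact (hw f (hM'E hf)).le
  have hsplit : ∑ e ∈ M, w e =
      ∑ e ∈ M.filter (fun e => P e), w e + ∑ e ∈ M.filter (fun e => ¬ P e), w e :=
    (Finset.sum_filter_add_sum_filter_not M _ w).symm
  have hmax : max (1 + β) (β + γℓ) = β + max 1 γℓ := by
    rw [add_comm 1 β, ← max_add_add_left]
  rw [hsplit, hmax, add_mul]
  exact add_le_add hC hPp
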